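/- Let f₁, f₂ : [0,1] → [0,1] be continuous with f₁(0) = f₂(0) = 0, f₁(1) = f₂(1) = 1. Then the set N = {(x,y) ∈ [0,1]² : f₁(x) = f₂(y)} has a connected component containing both the point (0,0) and the point (1,1). -/

import Mathlib

open Finset

def near (a b : ℕ) : Prop := b = a + 1 ∨ a = b + 1

instance : DecidableRel near := fun a b => by unfold near; infer_instance

lemma even_ind {c : ℤ} {a₁ a₂ b₁ b₂ : ℤ}
    (ha₁ : a₁ = c + 1 ∨ a₁ = c - 1) (ha₂ : a₂ = c + 1 ∨ a₂ = c - 1)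
    (hb₁ : b₁ = c + 1 ∨ b₁ = c - 1) (hb₂ : b₂ = c + 1 ∨ b₂ = c - 1) :
    Even ((if a₁ = b₁ then 1 else 0) + (if a₁ = b₂ then 1 else 0) +
      ((if a₂ = b₁ then 1 else 0) + (if a₂ = b₂ then 1 else 0)) : ℕ) := by
  have h1 : (c:ℤ) + 1 ≠ c - 1 := by omega
  have h2 : (c:ℤ) - 1 ≠ c + 1 := by omega
  rcases ha₁ with ha₁ | ha₁ <;> rcases ha₂ with ha₂ | ha₂ <;>
    rcases hb₁ with hb₁ | hb₁ <;> rcases hb₂ with hb₂ | hb₂ <;>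
    subst ha₁ <;> subst ha₂ <;> subst hb₁ <;> subst hb₂ <;>
    simp [h1, h2] <;> decide


lemma filter_near_zero {n : ℕ} (hn : 1 ≤ n) (v : Fin (n+1)) (hv : v.1 = 0) :
    Finset.univ.filter (fun x : Fin (n+1) => near v.1 x.1) = {⟨1, by omega⟩} := by
  ext x
  have hx := x.isLt
  simp only [Finset.mem_filter, Finset.mem_univ, true_and, Finset.mem_singleton,
    Fin.ext_iff, near, hv]
  omega

lemma filter_near_top {n : ℕ} (hn : 1 ≤ n) (v : Fin (n+1)) (hv : v.1 = n) :
    Finset.univ.filter (fun x : Fin (n+1) => near v.1 x.1) = {⟨n - 1, by omega⟩} := by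
  ext x
  have hx := x.isLt
  simp only [Finset.mem_filter, Finset.mem_univ, true_and, Finset.mem_singleton,
    Fin.ext_iff, near, hv]
  omega

lemma filter_near_mid {n : ℕ} (v : Fin (n+1)) (h0 : 0 < v.1) (hn : v.1 < n) :
    Finset.univ.filter (fun x : Fin (n+1) => near v.1 x.1) =
      {⟨v.1 - 1, by omega⟩, ⟨v.1 + 1, by omega⟩} := by
  ext x
  have hx := x.isLt
  rw [Finset.mem_filter]
  simp only [Finset.mem_filter, Finset.mem_univ, true_and, Finset.mem_insert,
    Finset.mem_singleton, Fin.ext_iff, near]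
  omega

/-- the step relation for the mountain chain, on ℕ × ℕ -/
def MStep (nA nB : ℕ) (A B : ℕ → ℤ) (p q : ℕ × ℕ) : Prop :=
  near p.1 q.1 ∧ near p.2 q.2 ∧ A p.1 = B p.2 ∧ A q.1 = B q.2 ∧
    p.1 ≤ nA ∧ p.2 ≤ nB ∧ q.1 ≤ nA ∧ q.2 ≤ nB

set_option maxHeartbeats 1000000 in
theorem discrete_mtn (M : ℤ) (hM : 1 ≤ M) (nA nB : ℕ) (A B : ℕ → ℤ)
    (hA0 : A 0 = 0) (hB0 : B 0 = 0) (hAn : A nA = M) (hBn : B nB = M)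
    (hAstep : ∀ i, A (i+1) = A i + 1 ∨ A (i+1) = A i - 1)
    (hBstep : ∀ j, B (j+1) = B j + 1 ∨ B (j+1) = B j - 1)
    (hAmem : ∀ i, 0 ≤ A i ∧ A i ≤ M) (hBmem : ∀ j, 0 ≤ B j ∧ B j ≤ M) :
    Relation.ReflTransGen (MStep nA nB A B) (0, 0) (nA, nB) := by
  classical
  -- derived facts
  have hnA1 : 1 ≤ nA := by
    rcases Nat.eq_zero_or_pos nA with h | h
    · rw [h, hA0] at hAn; omega
    · exact h
  have hnB1 : 1 ≤ nB := by
    rcases Nat.eq_zero_or_pos nB with h | h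
    · rw [h, hB0] at hBn; omega
    · exact h
  have upA : ∀ i, A i = 0 → A (i+1) = 1 := by
    intro i h; rcases hAstep i with h' | h' <;> [omega; (exact absurd (hAmem (i+1)).1 (by omega))]
  have upB : ∀ j, B j = 0 → B (j+1) = 1 := by
    intro j h; rcases hBstep j with h' | h' <;> [omega; (exact absurd (hBmem (j+1)).1 (by omega))]
  have intoA : ∀ i, A (i+1) = 0 → A i = 1 := by
    intro i h; rcases hAstep i with h' | h' <;> [(exact absurd (hAmem i).1 (by omega)); omega]
  have intoB : ∀ j, B (j+1) = 0 → B j = 1 := by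
    intro j h; rcases hBstep j with h' | h' <;> [(exact absurd (hBmem j).1 (by omega)); omega]
  have dnA : ∀ i, A i = M → A (i+1) = M - 1 := by
    intro i h; rcases hAstep i with h' | h' <;> [(exact absurd (hAmem (i+1)).2 (by omega)); omega]
  have dnB : ∀ j, B j = M → B (j+1) = M - 1 := by
    intro j h; rcases hBstep j with h' | h' <;> [(exact absurd (hBmem (j+1)).2 (by omega)); omega]
  have intoMA : ∀ i, A (i+1) = M → A i = M - 1 := by
    intro i h; rcases hAstep i with h' | h' <;> [omega; (exact absurd (hAmem i).2 (by omega))]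
  have intoMB : ∀ j, B (j+1) = M → B j = M - 1 := by
    intro j h; rcases hBstep j with h' | h' <;> [omega; (exact absurd (hBmem j).2 (by omega))]
  -- the graph
  let G : SimpleGraph (Fin (nA+1) × Fin (nB+1)) :=
    { Adj := fun u v => near u.1.1 v.1.1 ∧ near u.2.1 v.2.1 ∧
        A u.1.1 = B u.2.1 ∧ A v.1.1 = B v.2.1
      symm := by
        constructor
        intro u v h
        exact ⟨h.1.symm, h.2.1.symm, h.2.2.2, h.2.2.1⟩
      loopless := by
        constructor
        intro u h
        rcases h.1 with h' | h' <;> omega }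
  have hGAdj : ∀ u v : Fin (nA+1) × Fin (nB+1), G.Adj u v ↔ (near u.1.1 v.1.1 ∧ near u.2.1 v.2.1 ∧
      A u.1.1 = B u.2.1 ∧ A v.1.1 = B v.2.1) := fun u v => Iff.rfl
  let v₀ : Fin (nA+1) × Fin (nB+1) := (⟨0, by omega⟩, ⟨0, by omega⟩)
  let v₁ : Fin (nA+1) × Fin (nB+1) := (⟨nA, by omega⟩, ⟨nB, by omega⟩)
  -- degree computation
  have hdeg : ∀ v : Fin (nA+1) × Fin (nB+1), G.degree v =
      ∑ x ∈ univ.filter (fun x : Fin (nA+1) => near v.1.1 x.1),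
        ∑ y ∈ univ.filter (fun y : Fin (nB+1) => near v.2.1 y.1),
          (if A v.1.1 = B v.2.1 ∧ A x.1 = B y.1 then 1 else 0) := by
    intro v
    have hfe : univ.filter (G.Adj v) =
        (univ.filter (fun x : Fin (nA+1) => near v.1.1 x.1) ×ˢ
          univ.filter (fun y : Fin (nB+1) => near v.2.1 y.1)).filter
          (fun u : Fin (nA+1) × Fin (nB+1) => A v.1.1 = B v.2.1 ∧ A u.1.1 = B u.2.1) := by
      ext u
      simp only [Finset.mem_filter, Finset.mem_univ, true_and, Finset.mem_product, hGAdj]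
      tauto
    rw [SimpleGraph.degree, SimpleGraph.neighborFinset_eq_filter, hfe,
      Finset.card_filter, Finset.sum_product]
  have hA1 : A 1 = 1 := upA 0 hA0
  have hB1 : B 1 = 1 := upB 0 hB0
  have hAtop : A (nA - 1) = M - 1 := by
    apply intoMA
    rwa [Nat.sub_add_cancel hnA1]
  have hBtop : B (nB - 1) = M - 1 := by
    apply intoMB
    rwa [Nat.sub_add_cancel hnB1]
  have hodd0 : Odd (G.degree v₀) := by
    rw [hdeg v₀]
    rw [filter_near_zero hnA1 v₀.1 rfl, filter_near_zero hnB1 v₀.2 rfl]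
    rw [Finset.sum_singleton, Finset.sum_singleton]
    rw [if_pos ⟨by simp [v₀, hA0, hB0], by simp [hA1, hB1]⟩]
    decide
  have hodd1 : Odd (G.degree v₁) := by
    rw [hdeg v₁]
    rw [filter_near_top hnA1 v₁.1 rfl, filter_near_top hnB1 v₁.2 rfl]
    rw [Finset.sum_singleton, Finset.sum_singleton]
    rw [if_pos ⟨by simp [v₁, hAn, hBn], by simp [hAtop, hBtop]⟩]
    decide
  have heven : ∀ v, v ≠ v₀ → v ≠ v₁ → Even (G.degree v) := by
    intro v hv0 hv1
    by_cases hok : A v.1.1 = B v.2.1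
    · have hiLt := v.1.isLt
      have hjLt := v.2.isLt
      have hi : v.1.1 = 0 ∨ v.1.1 = nA ∨ (0 < v.1.1 ∧ v.1.1 < nA) := by omega
      have hj : v.2.1 = 0 ∨ v.2.1 = nB ∨ (0 < v.2.1 ∧ v.2.1 < nB) := by omega
      -- helper equalities for "into" facts at mid points
      rcases hi with hi | hi | hi
      · rcases hj with hj | hj | hj
        · exact absurd (Prod.ext (Fin.ext hi) (Fin.ext hj)) hv0
        · rw [hi, hA0] at hok
          rw [hj, hBn] at hok
          omega
        · -- i = 0, j mid : degree 2
          have hBj : B v.2.1 = 0 := by rw [hi, hA0] at hok; omega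
          have hjm : B (v.2.1 - 1) = 1 := by
            apply intoB
            rwa [Nat.sub_add_cancel hj.1]
          have hjp : B (v.2.1 + 1) = 1 := upB _ hBj
          rw [hdeg v, filter_near_zero hnA1 v.1 hi, filter_near_mid v.2 hj.1 hj.2]
          rw [Finset.sum_singleton, Finset.sum_pair (by simp only [ne_eq, Fin.mk.injEq]; omega)]
          rw [if_pos ⟨hok, by simp [hA1, hjm]⟩, if_pos ⟨hok, by simp [hA1, hjp]⟩]
          decide
      · rcases hj with hj | hj | hj
        · rw [hi, hAn] at hok
          rw [hj, hB0] at hok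
          omega
        · exact absurd (Prod.ext (Fin.ext hi) (Fin.ext hj)) hv1
        · -- i = nA, j mid : degree 2
          have hBj : B v.2.1 = M := by rw [hi, hAn] at hok; omega
          have hjm : B (v.2.1 - 1) = M - 1 := by
            apply intoMB
            rwa [Nat.sub_add_cancel hj.1]
          have hjp : B (v.2.1 + 1) = M - 1 := dnB _ hBj
          rw [hdeg v, filter_near_top hnA1 v.1 hi, filter_near_mid v.2 hj.1 hj.2]
          rw [Finset.sum_singleton, Finset.sum_pair (by simp only [ne_eq, Fin.mk.injEq]; omega)]
          rw [if_pos ⟨hok, by simp [hAtop, hjm]⟩, if_pos ⟨hok, by simp [hAtop, hjp]⟩]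
          decide
      · rcases hj with hj | hj | hj
        · -- i mid, j = 0 : degree 2
          have hAi : A v.1.1 = 0 := by rw [hj, hB0] at hok; omega
          have him : A (v.1.1 - 1) = 1 := by
            apply intoA
            rwa [Nat.sub_add_cancel hi.1]
          have hip : A (v.1.1 + 1) = 1 := upA _ hAi
          rw [hdeg v, filter_near_mid v.1 hi.1 hi.2, filter_near_zero hnB1 v.2 hj]
          rw [Finset.sum_pair (by simp only [ne_eq, Fin.mk.injEq]; omega)]
          rw [Finset.sum_singleton, Finset.sum_singleton]
          rw [if_pos ⟨hok, by simp [him, hB1]⟩, if_pos ⟨hok, by simp [hip, hB1]⟩]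
          decide
        · -- i mid, j = nB : degree 2
          have hAi : A v.1.1 = M := by rw [hj, hBn] at hok; omega
          have him : A (v.1.1 - 1) = M - 1 := by
            apply intoMA
            rwa [Nat.sub_add_cancel hi.1]
          have hip : A (v.1.1 + 1) = M - 1 := dnA _ hAi
          rw [hdeg v, filter_near_mid v.1 hi.1 hi.2, filter_near_top hnB1 v.2 hj]
          rw [Finset.sum_pair (by simp only [ne_eq, Fin.mk.injEq]; omega)]
          rw [Finset.sum_singleton, Finset.sum_singleton]
          rw [if_pos ⟨hok, by simp [him, hBtop]⟩, if_pos ⟨hok, by simp [hip, hBtop]⟩]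
          decide
        · -- interior : even
          have ha1 : A (v.1.1 - 1) = B v.2.1 + 1 ∨ A (v.1.1 - 1) = B v.2.1 - 1 := by
            have h := hAstep (v.1.1 - 1)
            rw [Nat.sub_add_cancel hi.1] at h
            omega
          have ha2 : A (v.1.1 + 1) = B v.2.1 + 1 ∨ A (v.1.1 + 1) = B v.2.1 - 1 := by
            have h := hAstep v.1.1
            omega
          have hb1 : B (v.2.1 - 1) = B v.2.1 + 1 ∨ B (v.2.1 - 1) = B v.2.1 - 1 := by
            have h := hBstep (v.2.1 - 1)
            rw [Nat.sub_add_cancel hj.1] at h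
            omega
          have hb2 : B (v.2.1 + 1) = B v.2.1 + 1 ∨ B (v.2.1 + 1) = B v.2.1 - 1 := by
            have h := hBstep v.2.1
            omega
          rw [hdeg v, filter_near_mid v.1 hi.1 hi.2, filter_near_mid v.2 hj.1 hj.2]
          rw [Finset.sum_pair (by simp only [ne_eq, Fin.mk.injEq]; omega)]
          rw [Finset.sum_pair (by simp only [ne_eq, Fin.mk.injEq]; omega),
            Finset.sum_pair (by simp only [ne_eq, Fin.mk.injEq]; omega)]
          simp only [hok, true_and]
          exact even_ind ha1 ha2 hb1 hb2
    · rw [hdeg v]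
      simp only [hok, false_and, if_false, Finset.sum_const_zero]
      exact Even.zero
  -- restrict to the connected component of v₀
  let H : SimpleGraph (Fin (nA+1) × Fin (nB+1)) :=
    { Adj := fun u v => G.Adj u v ∧ G.Reachable v₀ u ∧ G.Reachable v₀ v
      symm := by
        constructor
        intro u v h
        exact ⟨h.1.symm, h.2.2, h.2.1⟩
      loopless := ⟨fun u h => G.irrefl h.1⟩ }
  have hHdeg_reach : ∀ v, G.Reachable v₀ v → H.degree v = G.degree v := by
    intro v hr
    unfold SimpleGraph.degree
    congr 1
    ext u
    simp only [SimpleGraph.mem_neighborFinset]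
    constructor
    · exact fun h => h.1
    · exact fun h => ⟨h, hr, hr.trans (SimpleGraph.Adj.reachable h)⟩
  have hHdeg_not : ∀ v, ¬ G.Reachable v₀ v → H.degree v = 0 := by
    intro v hr
    rw [SimpleGraph.degree, Finset.card_eq_zero]
    ext u
    simp only [SimpleGraph.mem_neighborFinset, Finset.notMem_empty, iff_false]
    exact fun h => hr h.2.1
  have hodd0H : Odd (H.degree v₀) := by
    rw [hHdeg_reach _ (SimpleGraph.Reachable.refl _)]
    exact hodd0
  obtain ⟨w, hw_ne, hw_odd⟩ : ∃ w, w ≠ v₀ ∧ Odd (H.degree w) := by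
    obtain ⟨w, h1, h2⟩ := @SimpleGraph.exists_ne_odd_degree_of_exists_odd_degree _ H _
      (fun a b => Classical.propDecidable _) v₀ (by convert hodd0H)
    exact ⟨w, h1, by convert h2⟩
  have hRw : G.Reachable v₀ w := by
    by_contra h
    rw [hHdeg_not w h] at hw_odd
    simp at hw_odd
  have hw_oddG : Odd (G.degree w) := hHdeg_reach w hRw ▸ hw_odd
  have hw1 : w = v₁ := by
    by_contra h
    exact (Nat.not_odd_iff_even.mpr (heven w hw_ne h)) hw_oddG
  have hreach : G.Reachable v₀ v₁ := hw1 ▸ hRw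
  have key : ∀ (u x : Fin (nA+1) × Fin (nB+1)), G.Walk u x →
      Relation.ReflTransGen (MStep nA nB A B) (u.1.1, u.2.1) (x.1.1, x.2.1) := by
    intro u x w
    induction w with
    | nil => exact Relation.ReflTransGen.refl
    | @cons a b c h p ih =>
        refine Relation.ReflTransGen.head ?_ ih
        exact ⟨h.1, h.2.1, h.2.2.1, h.2.2.2, Nat.lt_succ_iff.mp a.1.isLt,
          Nat.lt_succ_iff.mp a.2.isLt, Nat.lt_succ_iff.mp b.1.isLt,
          Nat.lt_succ_iff.mp b.2.isLt⟩
  obtain ⟨w'⟩ := hreach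
  exact key v₀ v₁ w'


open Classical in
noncomputable def greedyWalk (M : ℕ) (g : ℕ → ℝ) : ℕ → ℤ
  | 0 => 0
  | (i+1) => if greedyWalk M g i < M ∧ (greedyWalk M g i : ℝ) ≤ M * g (i+1)
      then greedyWalk M g i + 1 else greedyWalk M g i - 1

lemma greedy (M : ℕ) (hM : 1 ≤ M) (n : ℕ) (g : ℕ → ℝ)
    (hg0 : g 0 = 0) (hg1 : ∀ i, n ≤ i → g i = 1)
    (hgmem : ∀ i, 0 ≤ g i ∧ g i ≤ 1)
    (hgstep : ∀ i, |(M:ℝ) * g (i+1) - M * g i| ≤ 1/2) :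
    ∃ (A : ℕ → ℤ) (nA : ℕ), n ≤ nA ∧ nA ≤ n + 1 ∧ A 0 = 0 ∧ A nA = M ∧
      (∀ i, A (i+1) = A i + 1 ∨ A (i+1) = A i - 1) ∧
      (∀ i, 0 ≤ A i ∧ A i ≤ M) ∧
      (∀ i, |(A i : ℝ) - M * g i| ≤ 1) := by
  classical
  set A := greedyWalk M g with hA
  have hstep : ∀ i, A (i+1) = if A i < M ∧ (A i : ℝ) ≤ M * g (i+1)
      then A i + 1 else A i - 1 := fun i => rfl
  have hMR : (1:ℝ) ≤ M := by exact_mod_cast hM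
  have hinv : ∀ i, (0 ≤ A i ∧ A i ≤ M) ∧ |(A i : ℝ) - M * g i| ≤ 1 := by
    intro i
    induction i with
    | zero =>
        constructor
        · constructor <;> simp [hA, greedyWalk]
        · simp [hA, greedyWalk, hg0]
    | succ i ih =>
        obtain ⟨⟨hlo, hhi⟩, happ⟩ := ih
        have hs := hgstep i
        have habs := abs_le.mp happ
        have hgs := abs_le.mp hs
        rw [hstep i]
        by_cases hc : A i < M ∧ (A i : ℝ) ≤ M * g (i+1)
        · rw [if_pos hc]
          obtain ⟨hc1, hc2⟩ := hc
          refine ⟨⟨by omega, by omega⟩, abs_le.mpr ⟨by push_cast; linarith, by push_cast; linarith⟩⟩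
        · rw [if_neg hc]
          push_neg at hc
          rcases lt_or_ge (A i) M with hlt | hge
          · -- A i < M, so M * g (i+1) < A i
            have hc2 := hc hlt
            have hg0' := (hgmem (i+1)).1
            have : (0:ℝ) ≤ M * g (i+1) := by positivity
            have hApos : 0 < A i := by
              by_contra h
              push_neg at h
              have : (A i : ℝ) ≤ 0 := by exact_mod_cast h
              linarith
            refine ⟨⟨by omega, by omega⟩, abs_le.mpr ⟨by push_cast; linarith, by push_cast; linarith⟩⟩
          · -- A i = M
            have hAM : A i = M := le_antisymm hhi hge
            have hgle : g (i+1) ≤ 1 := (hgmem (i+1)).2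
            have hcast : (A i : ℝ) = M := by exact_mod_cast hAM
            have : (M:ℝ) * g (i+1) ≤ M := by nlinarith
            refine ⟨⟨by omega, by omega⟩, abs_le.mpr ⟨by push_cast; linarith, by push_cast; linarith⟩⟩
  have hgn : g n = 1 := hg1 n le_rfl
  have hAn : A n = M ∨ A n = M - 1 := by
    have h := (hinv n).2
    rw [hgn, mul_one] at h
    have := abs_le.mp h
    have h1 : (M:ℝ) - 1 ≤ (A n : ℝ) := by linarith [this.1]
    have h2 : (M:ℤ) - 1 ≤ A n := by exact_mod_cast h1
    have := (hinv n).1.2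
    omega
  rcases hAn with hAn | hAn
  · exact ⟨A, n, le_rfl, by omega, rfl, hAn, fun i => by rw [hstep i]; split <;> [left; right] <;> rfl,
      fun i => (hinv i).1, fun i => (hinv i).2⟩
  · refine ⟨A, n + 1, by omega, le_rfl, rfl, ?_, fun i => by rw [hstep i]; split <;> [left; right] <;> rfl,
      fun i => (hinv i).1, fun i => (hinv i).2⟩
    have hcond : (A n : ℝ) ≤ M * g (n+1) := by
      rw [hg1 (n+1) (by omega), mul_one]
      have : ((A n : ℝ)) = (M:ℝ) - 1 := by exact_mod_cast hAn
      linarith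
    rw [hstep n, if_pos ⟨by omega, hcond⟩]
    omega

set_option maxHeartbeats 1000000 in
lemma approx_conn (f₁ f₂ : unitInterval → unitInterval)
    (hf₁ : Continuous f₁) (hf₂ : Continuous f₂)
    (h₁0 : f₁ 0 = 0) (h₂0 : f₂ 0 = 0) (h₁1 : f₁ 1 = 1) (h₂1 : f₂ 1 = 1)
    (ε : ℝ) (hε : 0 < ε) :
    ∃ S : Set (unitInterval × unitInterval), IsPreconnected S ∧
      ((0:unitInterval), (0:unitInterval)) ∈ S ∧
      ((1:unitInterval), (1:unitInterval)) ∈ S ∧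
      ∀ p ∈ S, |(f₁ p.1 : ℝ) - (f₂ p.2 : ℝ)| ≤ ε := by
  classical
  -- choose M
  set M : ℕ := max 1 ⌈4/ε⌉₊ with hMdef
  have hM1 : 1 ≤ M := le_max_left _ _
  have hMR : (1:ℝ) ≤ M := by exact_mod_cast hM1
  have hMpos : (0:ℝ) < M := by linarith
  have hMε : 4/ε ≤ M := by
    calc 4/ε ≤ (⌈4/ε⌉₊ : ℝ) := Nat.le_ceil _
    _ ≤ M := by exact_mod_cast le_max_right _ _
  have h2M : 2/(M:ℝ) ≤ ε/2 := by
    rw [div_le_div_iff₀ hMpos (by norm_num)]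
    rw [div_le_iff₀ hε] at hMε
    linarith
  -- uniform continuity
  set ε₀ : ℝ := min (1/(2*M)) (ε/4) with hε₀def
  have hε₀ : 0 < ε₀ := by
    apply lt_min
    · positivity
    · linarith
  obtain ⟨δ₁, hδ₁, hu₁⟩ := Metric.uniformContinuous_iff.mp
    (CompactSpace.uniformContinuous_of_continuous hf₁) ε₀ hε₀
  obtain ⟨δ₂, hδ₂, hu₂⟩ := Metric.uniformContinuous_iff.mp
    (CompactSpace.uniformContinuous_of_continuous hf₂) ε₀ hε₀
  set δ : ℝ := min δ₁ δ₂ with hδdef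
  have hδ : 0 < δ := lt_min hδ₁ hδ₂
  obtain ⟨n', hn'⟩ := exists_nat_one_div_lt hδ
  set n : ℕ := n' + 1 with hndef
  have hn1 : 1 ≤ n := by omega
  have hnpos : (0:ℝ) < n := by positivity
  have hnδ : 1/(n:ℝ) < δ := by exact_mod_cast hn'
  -- grid
  set t : ℕ → unitInterval := fun i => Set.projIcc 0 1 zero_le_one ((i:ℝ)/n) with htdef
  have ht0 : t 0 = 0 := by
    apply Subtype.ext
    simp [htdef, Set.coe_projIcc]
  have ht1 : ∀ i, n ≤ i → t i = 1 := by
    intro i hi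
    have : (1:ℝ) ≤ (i:ℝ)/n := by
      rw [le_div_iff₀ hnpos]
      rw [one_mul]
      exact_mod_cast hi
    apply Subtype.ext
    simp only [htdef, Set.coe_projIcc, Set.Icc.coe_one]
    rw [min_eq_left this, max_eq_right zero_le_one]
  have htdist : ∀ i j : ℕ, near i j → dist (t i) (t j) ≤ 1/(n:ℝ) := by
    intro i j hij
    have hl := (LipschitzWith.projIcc (zero_le_one : (0:ℝ) ≤ 1)).dist_le_mul
      ((i:ℝ)/n) ((j:ℝ)/n)
    rw [NNReal.coe_one, one_mul] at hl
    refine le_trans hl ?_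
    rcases hij with h | h <;> subst h
    · have he : (i:ℝ)/n - ((i+1:ℕ):ℝ)/n = -(1/n) := by push_cast; ring
      rw [Real.dist_eq, he, abs_neg, abs_of_pos (by positivity)]
    · have he : ((j+1:ℕ):ℝ)/n - (j:ℝ)/n = 1/n := by push_cast; ring
      rw [Real.dist_eq, he, abs_of_pos (by positivity)]
  -- sampled values
  set g₁ : ℕ → ℝ := fun i => (f₁ (t i) : ℝ) with hg₁def
  set g₂ : ℕ → ℝ := fun i => (f₂ (t i) : ℝ) with hg₂def
  have hdist_f : ∀ (f : unitInterval → unitInterval) (x y : unitInterval),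
      dist (f x) (f y) = |(f x : ℝ) - (f y : ℝ)| := by
    intro f x y
    rw [Subtype.dist_eq, Real.dist_eq]
  have hε₀1 : ε₀ ≤ 1/(2*M) := min_le_left _ _
  have hε₀2 : ε₀ ≤ ε/4 := min_le_right _ _
  have hstep₁ : ∀ i, |(M:ℝ) * g₁ (i+1) - M * g₁ i| ≤ 1/2 := by
    intro i
    have hd : dist (t (i+1)) (t i) < δ₁ := by
      refine lt_of_le_of_lt (htdist _ _ (Or.inr rfl)) (lt_of_lt_of_le hnδ ?_)
      exact min_le_left _ _
    have := hu₁ hd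
    rw [hdist_f] at this
    have habs : |g₁ (i+1) - g₁ i| ≤ 1/(2*M) := le_trans (le_of_lt this) hε₀1
    have : |(M:ℝ) * g₁ (i+1) - M * g₁ i| = M * |g₁ (i+1) - g₁ i| := by
      rw [← mul_sub, abs_mul, abs_of_pos hMpos]
    rw [this]
    calc (M:ℝ) * |g₁ (i+1) - g₁ i| ≤ M * (1/(2*M)) := by
          exact mul_le_mul_of_nonneg_left habs (le_of_lt hMpos)
      _ = 1/2 := by field_simp
  have hstep₂ : ∀ i, |(M:ℝ) * g₂ (i+1) - M * g₂ i| ≤ 1/2 := by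
    intro i
    have hd : dist (t (i+1)) (t i) < δ₂ := by
      refine lt_of_le_of_lt (htdist _ _ (Or.inr rfl)) (lt_of_lt_of_le hnδ ?_)
      exact min_le_right _ _
    have := hu₂ hd
    rw [hdist_f] at this
    have habs : |g₂ (i+1) - g₂ i| ≤ 1/(2*M) := le_trans (le_of_lt this) hε₀1
    have : |(M:ℝ) * g₂ (i+1) - M * g₂ i| = M * |g₂ (i+1) - g₂ i| := by
      rw [← mul_sub, abs_mul, abs_of_pos hMpos]
    rw [this]
    calc (M:ℝ) * |g₂ (i+1) - g₂ i| ≤ M * (1/(2*M)) := by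
          exact mul_le_mul_of_nonneg_left habs (le_of_lt hMpos)
      _ = 1/2 := by field_simp
  obtain ⟨A, nA, hnA, hnA', hA0, hAn, hAstep, hAmem, hAapp⟩ :=
    greedy M hM1 n g₁ (by rw [hg₁def]; simp [ht0, h₁0])
      (fun i hi => by rw [hg₁def]; simp [ht1 i hi, h₁1])
      (fun i => ⟨(f₁ (t i)).2.1, (f₁ (t i)).2.2⟩) hstep₁
  obtain ⟨B, nB, hnB, hnB', hB0, hBn, hBstep, hBmem, hBapp⟩ :=
    greedy M hM1 n g₂ (by rw [hg₂def]; simp [ht0, h₂0])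
      (fun i hi => by rw [hg₂def]; simp [ht1 i hi, h₂1])
      (fun i => ⟨(f₂ (t i)).2.1, (f₂ (t i)).2.2⟩) hstep₂
  have hchain := discrete_mtn (M:ℤ) (by exact_mod_cast hM1) nA nB A B hA0 hB0
    (by exact_mod_cast hAn) (by exact_mod_cast hBn) hAstep hBstep
    (fun i => by constructor <;> [exact (hAmem i).1; exact_mod_cast (hAmem i).2])
    (fun j => by constructor <;> [exact (hBmem j).1; exact_mod_cast (hBmem j).2])
  -- value comparison at matched grid points
  have hval : ∀ i j : ℕ, A i = B j → |g₁ i - g₂ j| ≤ ε/2 := by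
    intro i j hij
    have h1 := abs_le.mp (hAapp i)
    have h2 := abs_le.mp (hBapp j)
    have hAB : ((A i : ℝ)) = (B j : ℝ) := by exact_mod_cast hij
    have h4 : |(M:ℝ) * (g₁ i - g₂ j)| ≤ 2 := by
      rw [abs_le]
      constructor <;> [nlinarith; nlinarith]
    rw [abs_mul, abs_of_pos hMpos] at h4
    have h5 : |g₁ i - g₂ j| ≤ 2/M := by
      rw [le_div_iff₀ hMpos]
      linarith [mul_comm (M:ℝ) |g₁ i - g₂ j|]
    linarith
  -- connected edge pieces
  have hedge : ∀ p q : ℕ × ℕ, MStep nA nB A B p q →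
      ∃ E : Set (unitInterval × unitInterval), IsPreconnected E ∧
        (t p.1, t p.2) ∈ E ∧ (t q.1, t q.2) ∈ E ∧
        ∀ r ∈ E, |(f₁ r.1 : ℝ) - (f₂ r.2 : ℝ)| ≤ ε := by
    intro p q hpq
    obtain ⟨hnear1, hnear2, hokp, hokq, hb1, hb2, hb3, hb4⟩ := hpq
    set x₀ : ℝ := (t p.1 : ℝ) with hx₀
    set y₀ : ℝ := (t p.2 : ℝ) with hy₀
    set x₁ : ℝ := (t q.1 : ℝ) with hx₁
    set y₁ : ℝ := (t q.2 : ℝ) with hy₁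
    set γ : ℝ → unitInterval × unitInterval := fun s =>
      (Set.projIcc 0 1 zero_le_one ((1-s)*x₀ + s*x₁),
       Set.projIcc 0 1 zero_le_one ((1-s)*y₀ + s*y₁)) with hγ
    have hlin : ∀ a b : ℝ, Continuous (fun s : ℝ => (1-s)*a + s*b) := by
      intro a b
      exact (((continuous_const.sub continuous_id).mul continuous_const).add
        (continuous_id.mul continuous_const))
    have hcont : Continuous γ :=
      (continuous_projIcc.comp (hlin x₀ x₁)).prodMk (continuous_projIcc.comp (hlin y₀ y₁))
    refine ⟨γ '' Set.Icc 0 1, isPreconnected_Icc.image γ hcont.continuousOn, ?_, ?_, ?_⟩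
    · refine ⟨0, by norm_num, ?_⟩
      rw [hγ]
      apply Prod.ext <;> simp only []
      · rw [show (1-(0:ℝ))*x₀ + 0*x₁ = x₀ by ring, hx₀, Set.projIcc_val]
      · rw [show (1-(0:ℝ))*y₀ + 0*y₁ = y₀ by ring, hy₀, Set.projIcc_val]
    · refine ⟨1, by norm_num, ?_⟩
      rw [hγ]
      apply Prod.ext <;> simp only []
      · rw [show (1-(1:ℝ))*x₀ + 1*x₁ = x₁ by ring, hx₁, Set.projIcc_val]
      · rw [show (1-(1:ℝ))*y₀ + 1*y₁ = y₁ by ring, hy₁, Set.projIcc_val]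
    · rintro r ⟨s, hs, rfl⟩
      obtain ⟨hs0, hs1⟩ := hs
      have key : ∀ (u₀ u₁ : unitInterval) (c : ℝ), c = (1-s)*(u₀:ℝ) + s*(u₁:ℝ) →
          dist u₀ u₁ ≤ 1/(n:ℝ) →
          dist (Set.projIcc 0 1 zero_le_one c) u₀ < δ := by
        intro u₀ u₁ c hc hd
        have h1 : dist (Set.projIcc 0 1 zero_le_one c)
            (Set.projIcc 0 1 zero_le_one (u₀:ℝ)) ≤ dist c (u₀:ℝ) := by
          have := (LipschitzWith.projIcc (zero_le_one : (0:ℝ) ≤ 1)).dist_le_mul c (u₀:ℝ)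
          rwa [NNReal.coe_one, one_mul] at this
        rw [Set.projIcc_val] at h1
        have h2 : dist c (u₀:ℝ) ≤ dist u₀ u₁ := by
          rw [Real.dist_eq, hc, Subtype.dist_eq, Real.dist_eq]
          have : (1-s)*(u₀:ℝ) + s*(u₁:ℝ) - u₀ = s * ((u₁:ℝ) - u₀) := by ring
          rw [this, abs_mul, abs_of_nonneg hs0, abs_sub_comm]
          nlinarith [abs_nonneg ((u₀:ℝ) - (u₁:ℝ))]
        calc dist (Set.projIcc 0 1 zero_le_one c) u₀ ≤ dist u₀ u₁ := le_trans h1 h2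
          _ ≤ 1/(n:ℝ) := hd
          _ < δ := hnδ
      have hd1 : dist (γ s).1 (t p.1) < δ₁ :=
        lt_of_lt_of_le (key (t p.1) (t q.1) _ rfl (htdist _ _ hnear1)) (min_le_left _ _)
      have hd2 : dist (γ s).2 (t p.2) < δ₂ :=
        lt_of_lt_of_le (key (t p.2) (t q.2) _ rfl (htdist _ _ hnear2)) (min_le_right _ _)
      have he1 : |(f₁ (γ s).1 : ℝ) - g₁ p.1| ≤ ε/4 := by
        have := hu₁ hd1
        rw [hdist_f] at this
        exact le_trans this.le hε₀2
      have he2 : |(f₂ (γ s).2 : ℝ) - g₂ p.2| ≤ ε/4 := by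
        have := hu₂ hd2
        rw [hdist_f] at this
        exact le_trans this.le hε₀2
      have he3 := hval p.1 p.2 hokp
      calc |(f₁ (γ s).1 : ℝ) - (f₂ (γ s).2 : ℝ)|
          ≤ |(f₁ (γ s).1 : ℝ) - g₁ p.1| + |g₁ p.1 - g₂ p.2| + |g₂ p.2 - (f₂ (γ s).2 : ℝ)| := by
            have := abs_sub_le ((f₁ (γ s).1 : ℝ)) (g₁ p.1) ((f₂ (γ s).2 : ℝ))
            have := abs_sub_le (g₁ p.1) (g₂ p.2) ((f₂ (γ s).2 : ℝ))
            linarith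
        _ ≤ ε/4 + ε/2 + ε/4 := by
            have : |g₂ p.2 - (f₂ (γ s).2 : ℝ)| = |(f₂ (γ s).2 : ℝ) - g₂ p.2| := abs_sub_comm _ _
            linarith
        _ = ε := by ring
  -- induct along the chain
  have hind : ∀ p : ℕ × ℕ, Relation.ReflTransGen (MStep nA nB A B) (0,0) p →
      ∃ S : Set (unitInterval × unitInterval), IsPreconnected S ∧
        (t 0, t 0) ∈ S ∧ (t p.1, t p.2) ∈ S ∧
        ∀ r ∈ S, |(f₁ r.1 : ℝ) - (f₂ r.2 : ℝ)| ≤ ε := by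
    intro p h
    induction h with
    | refl =>
        refine ⟨{(t 0, t 0)}, isPreconnected_singleton, rfl, rfl, ?_⟩
        rintro r rfl
        rw [ht0]
        simp only [h₁0, h₂0]
        simpa using hε.le
    | @tail b c hab hbc ih =>
        obtain ⟨S, hS, hS0, hSb, hSbd⟩ := ih
        obtain ⟨E, hE, hEb, hEc, hEbd⟩ := hedge b c hbc
        refine ⟨S ∪ E, IsPreconnected.union (t b.1, t b.2) hSb hEb hS hE,
          Or.inl hS0, Or.inr hEc, ?_⟩
        rintro r (hr | hr)
        · exact hSbd r hr
        · exact hEbd r hr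
  obtain ⟨S, hS, hS0, hS1, hSbd⟩ := hind (nA, nB) hchain
  refine ⟨S, hS, ?_, ?_, hSbd⟩
  · rwa [ht0] at hS0
  · rwa [ht1 nA hnA, ht1 nB hnB] at hS1

theorem stmt_2 (f₁ f₂ : unitInterval → unitInterval)
    (hf₁ : Continuous f₁) (hf₂ : Continuous f₂)
    (h₁0 : f₁ 0 = 0) (h₂0 : f₂ 0 = 0) (h₁1 : f₁ 1 = 1) (h₂1 : f₂ 1 = 1) :
    ((1 : unitInterval), (1 : unitInterval)) ∈
      connectedComponentIn {p : unitInterval × unitInterval | f₁ p.1 = f₂ p.2}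
        ((0 : unitInterval), (0 : unitInterval)) := by
  classical
  set N : Set (unitInterval × unitInterval) := {p | f₁ p.1 = f₂ p.2} with hNdef
  have hNclosed : IsClosed N :=
    isClosed_eq (hf₁.comp continuous_fst) (hf₂.comp continuous_snd)
  have h0 : ((0:unitInterval), (0:unitInterval)) ∈ N := by
    simp only [hNdef, Set.mem_setOf_eq, h₁0, h₂0]
  have h1 : ((1:unitInterval), (1:unitInterval)) ∈ N := by
    simp only [hNdef, Set.mem_setOf_eq, h₁1, h₂1]
  haveI : CompactSpace N := isCompact_iff_compactSpace.mp hNclosed.isCompact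
  rw [connectedComponentIn_eq_image h0]
  suffices hmem : (⟨((1:unitInterval),(1:unitInterval)), h1⟩ : N) ∈
      connectedComponent (⟨((0:unitInterval),(0:unitInterval)), h0⟩ : N) by
    exact ⟨_, hmem, rfl⟩
  rw [connectedComponent_eq_iInter_isClopen, Set.mem_iInter]
  rintro ⟨Z, hZclopen, hZ0⟩
  by_contra hZ1
  simp only at hZ1
  -- two disjoint compact pieces of N
  set Cz : Set (unitInterval × unitInterval) := (↑) '' Z with hCz
  set Cw : Set (unitInterval × unitInterval) := (↑) '' Zᶜ with hCw
  have hCzcomp : IsCompact Cz :=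
    (hZclopen.isClosed.isCompact).image continuous_subtype_val
  have hCwcomp : IsCompact Cw :=
    (hZclopen.compl.isClosed.isCompact).image continuous_subtype_val
  have hdisj : Disjoint Cz Cw :=
    Set.disjoint_image_of_injective Subtype.coe_injective disjoint_compl_right
  obtain ⟨U, V, hUopen, hVopen, hCzU, hCwV, hUV⟩ :=
    SeparatedNhds.of_isCompact_isCompact hCzcomp hCwcomp hdisj
  have hNsub : N ⊆ U ∪ V := by
    intro p hp
    by_cases hpz : (⟨p, hp⟩ : N) ∈ Z
    · exact Or.inl (hCzU ⟨⟨p, hp⟩, hpz, rfl⟩)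
    · exact Or.inr (hCwV ⟨⟨p, hp⟩, hpz, rfl⟩)
  -- a compactness argument to trap an approximate level set inside U ∪ V
  set F : unitInterval × unitInterval → ℝ := fun p => |(f₁ p.1 : ℝ) - (f₂ p.2 : ℝ)| with hF
  have hFcont : Continuous F :=
    (((continuous_subtype_val.comp (hf₁.comp continuous_fst)).sub
      (continuous_subtype_val.comp (hf₂.comp continuous_snd)))).abs
  set K : ℕ → Set (unitInterval × unitInterval) :=
    fun k => {p | F p ≤ 1/(k+1)} \ (U ∪ V) with hK
  have hKclosed : ∀ k, IsClosed (K k) :=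
    fun k => ((isClosed_le hFcont continuous_const).sdiff (hUopen.union hVopen))
  have hKdir : Directed (· ⊇ ·) K := by
    intro a b
    refine ⟨max a b, ?_, ?_⟩ <;>
      · intro p hp
        have hp1 := hp.1
        simp only [Set.mem_setOf_eq] at hp1
        refine ⟨?_, hp.2⟩
        simp only [Set.mem_setOf_eq]
        refine le_trans hp1 ?_
        apply one_div_le_one_div_of_le
        · positivity
        · push_cast
          simp [le_max_iff]
  have hKempty : ∃ k, K k = ∅ := by
    by_contra h
    push_neg at h
    have := IsCompact.nonempty_iInter_of_directed_nonempty_isCompact_isClosed K hKdir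
      (fun k => h k)
      (fun k => (hKclosed k).isCompact) hKclosed
    obtain ⟨p, hp⟩ := this
    have hpN : p ∈ N := by
      have hFp : F p = 0 := by
        have hle : ∀ k : ℕ, F p ≤ 1/(k+1) := fun k => (Set.mem_iInter.mp hp k).1
        have hnn : 0 ≤ F p := abs_nonneg _
        by_contra hne
        have hpos : 0 < F p := lt_of_le_of_ne hnn (Ne.symm hne)
        obtain ⟨k, hk⟩ := exists_nat_one_div_lt hpos
        exact absurd (hle k) (by push_cast at hk ⊢; linarith)
      have : (f₁ p.1 : ℝ) = (f₂ p.2 : ℝ) := by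
        have := abs_eq_zero.mp hFp
        linarith
      exact Subtype.coe_injective this
    exact (Set.mem_iInter.mp hp 0).2 (hNsub hpN)
  obtain ⟨k, hk⟩ := hKempty
  have hsub : {p | F p ≤ 1/(k+1)} ⊆ U ∪ V := by
    intro p hp
    by_contra hpuv
    have hmem : p ∈ K k := ⟨hp, hpuv⟩
    rw [hk] at hmem
    exact hmem
  obtain ⟨S, hSconn, hS0, hS1, hSbd⟩ := approx_conn f₁ f₂ hf₁ hf₂ h₁0 h₂0 h₁1 h₂1
    (1/(k+1)) (by positivity)
  have hSsub : S ⊆ U ∪ V := fun p hp => hsub (by exact_mod_cast hSbd p hp)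
  have h0U : ((0:unitInterval),(0:unitInterval)) ∈ U := hCzU ⟨⟨_, h0⟩, hZ0, rfl⟩
  have h1V : ((1:unitInterval),(1:unitInterval)) ∈ V := hCwV ⟨⟨_, h1⟩, hZ1, rfl⟩
  obtain ⟨x, hxS, hxU, hxV⟩ := hSconn U V hUopen hVopen hSsub ⟨_, hS0, h0U⟩ ⟨_, hS1, h1V⟩
  exact (Set.disjoint_iff.mp hUV) ⟨hxU, hxV⟩
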